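/- Let n ≥ 3 and m ≥ 3. Then mr_+^R(C_n ∘ C_m) = mr_+^C(C_n ∘ C_m) = n(m − 1) − 2, where C_n ∘ C_m is the corona product of the cycle C_n with the cycle C_m. -/

import Mathlib

open scoped ComplexOrder

/-- The minimum positive semidefinite rank of a simple graph `G` over the field `𝕜`
(`𝕜 = ℝ` gives `mr₊^ℝ`, `𝕜 = ℂ` gives `mr₊^ℂ`): the minimum rank over all positive
semidefinite Hermitian matrices whose off-diagonal zero/nonzero pattern matches `G`. -/
noncomputable def mrPlus (𝕜 : Type) [RCLike 𝕜] {V : Type} [Fintype V] [DecidableEq V]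
    (G : SimpleGraph V) : ℕ :=
  sInf {r : ℕ | ∃ A : Matrix V V 𝕜, A.PosSemidef ∧
    (∀ i j : V, i ≠ j → (A i j ≠ 0 ↔ G.Adj i j)) ∧ A.rank = r}

/-- `G` is a frame graph in the `d`-dimensional inner product space over `𝕜`:
there is a spanning family (frame) `f` indexed by the vertices such that distinct
vertices are adjacent iff the corresponding vectors are non-orthogonal. -/
def IsFrameGraphIn (𝕜 : Type) [RCLike 𝕜] {V : Type} (G : SimpleGraph V) (d : ℕ) : Prop :=
  ∃ f : V → EuclideanSpace 𝕜 (Fin d),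
    Submodule.span 𝕜 (Set.range f) = ⊤ ∧
    ∀ i j : V, i ≠ j → ((inner 𝕜 (f i) (f j) : 𝕜) ≠ 0 ↔ G.Adj i j)

/-- The strong product of two simple graphs. -/
def strongProd {α β : Type} (G : SimpleGraph α) (H : SimpleGraph β) :
    SimpleGraph (α × β) where
  Adj x y := (x.1 = y.1 ∧ H.Adj x.2 y.2) ∨ (x.2 = y.2 ∧ G.Adj x.1 y.1) ∨
    (G.Adj x.1 y.1 ∧ H.Adj x.2 y.2)
  symm := ⟨by
    rintro ⟨a, b⟩ ⟨c, d⟩ (⟨h1, h2⟩ | ⟨h1, h2⟩ | ⟨h1, h2⟩)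
    · exact Or.inl ⟨h1.symm, h2.symm⟩
    · exact Or.inr (Or.inl ⟨h1.symm, h2.symm⟩)
    · exact Or.inr (Or.inr ⟨h1.symm, h2.symm⟩)⟩
  loopless := ⟨by
    rintro ⟨a, b⟩ (⟨_, h⟩ | ⟨_, h⟩ | ⟨h, _⟩)
    · exact H.loopless.irrefl b h
    · exact G.loopless.irrefl a h
    · exact G.loopless.irrefl a h⟩

/-- The join `G ∨ H` of two graphs with disjoint vertex sets. -/
def joinGraph {α β : Type} (G : SimpleGraph α) (H : SimpleGraph β) :
    SimpleGraph (α ⊕ β) where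
  Adj x y := match x, y with
    | Sum.inl a, Sum.inl b => G.Adj a b
    | Sum.inr a, Sum.inr b => H.Adj a b
    | Sum.inl _, Sum.inr _ => True
    | Sum.inr _, Sum.inl _ => True
  symm := ⟨by
    rintro (a | a) (b | b) h
    · exact h.symm
    · trivial
    · trivial
    · exact h.symm⟩
  loopless := ⟨by
    rintro (a | a) h
    · exact G.loopless.irrefl a h
    · exact H.loopless.irrefl a h⟩

/-- The vertex-sum `G · H` of `G` and `H`, obtained by identifying the vertex `a` of `G`
with the vertex `b` of `H` (and no other vertices or edges shared). -/
def vertexSum {α β : Type} (G : SimpleGraph α) (H : SimpleGraph β) (a : α) (b : β) :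
    SimpleGraph (α ⊕ {y : β // y ≠ b}) where
  Adj x y := match x, y with
    | Sum.inl u, Sum.inl u' => G.Adj u u'
    | Sum.inr v, Sum.inr v' => H.Adj v.1 v'.1
    | Sum.inl u, Sum.inr v => u = a ∧ H.Adj b v.1
    | Sum.inr v, Sum.inl u => u = a ∧ H.Adj b v.1
  symm := ⟨by
    rintro (u | v) (u' | v') h
    · exact h.symm
    · exact h
    · exact h
    · exact h.symm⟩
  loopless := ⟨by
    rintro (u | v) h
    · exact G.loopless.irrefl u h
    · exact H.loopless.irrefl v.1 h⟩

/-- The corona product `G ∘ H`: one copy of `G`, one copy of `H` for each vertex of `G`,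
with every vertex of the `i`-th copy of `H` joined to the `i`-th vertex of `G`. -/
def corona {α β : Type} (G : SimpleGraph α) (H : SimpleGraph β) :
    SimpleGraph (α ⊕ α × β) where
  Adj x y := match x, y with
    | Sum.inl u, Sum.inl u' => G.Adj u u'
    | Sum.inr p, Sum.inr q => p.1 = q.1 ∧ H.Adj p.2 q.2
    | Sum.inl u, Sum.inr p => u = p.1
    | Sum.inr p, Sum.inl u => u = p.1
  symm := ⟨by
    rintro (u | p) (u' | q) h
    · exact h.symm
    · exact h
    · exact h
    · exact ⟨h.1.symm, h.2.symm⟩⟩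
  loopless := ⟨by
    rintro (u | p) h
    · exact G.loopless.irrefl u h
    · exact H.loopless.irrefl p.2 h.2⟩

/-- `v : Fin m → V` is an OS-vertex set of `G`: the vertices are distinct, and for each `k`
there is `w` adjacent to `v k`, different from all `v l` with `l ≤ k`, and non-adjacent to
every `v l` (`l < k`) lying in the connected component of `v k` in the subgraph induced by
`{v 0, …, v k}`. -/
def IsOSSet {V : Type} (G : SimpleGraph V) {m : ℕ} (v : Fin m → V) : Prop :=
  Function.Injective v ∧
  ∀ k : Fin m, ∃ w : V,
    G.Adj (v k) w ∧
    (∀ l : Fin m, l ≤ k → w ≠ v l) ∧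
    ∀ l : Fin m, (hl : l < k) →
      (G.induce {x : V | ∃ l' : Fin m, l' ≤ k ∧ x = v l'}).Reachable
        ⟨v l, ⟨l, le_of_lt hl, rfl⟩⟩ ⟨v k, ⟨k, le_refl k, rfl⟩⟩ →
      ¬ G.Adj w (v l)

/-- The OS-number of `G`: the maximum cardinality of an OS-vertex set of `G`. -/
noncomputable def OSNumber {V : Type} (G : SimpleGraph V) : ℕ :=
  sSup {m : ℕ | ∃ v : Fin m → V, IsOSSet G v}

/-! ### Auxiliary development for the proof -/

section MsrProof

open Matrix

/-- numeric adjacency in a cycle on `k` vertices -/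
def MsrAux.adjval (k a b : ℕ) : Prop := (a + 1) % k = b ∨ (b + 1) % k = a

open MsrAux in
lemma MsrAux.cycleGraph_adj_iff_adjval {k : ℕ} (hk : 3 ≤ k) (i j : Fin k) :
    (SimpleGraph.cycleGraph k).Adj i j ↔ adjval k i.val j.val := by
  obtain ⟨k', rfl⟩ : ∃ k', k = k' + 2 := ⟨k - 2, by omega⟩
  rw [SimpleGraph.cycleGraph_adj]
  have h1 : ∀ u v : Fin (k' + 2), u - v = 1 ↔ (v.val + 1) % (k' + 2) = u.val := by
    intro u v
    rw [sub_eq_iff_eq_add]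
    constructor
    · rintro rfl; simp [Fin.val_add, Fin.val_one, Nat.add_comm]
    · intro h; apply Fin.ext; simp [Fin.val_add, Fin.val_one, ← h, Nat.add_comm]
  rw [h1, h1, adjval, or_comm]

namespace MsrAux

section InnerSpace

variable {𝕜 : Type} [RCLike 𝕜] {E : Type} [NormedAddCommGroup E] [InnerProductSpace 𝕜 E]

local notation "⟪" x ", " y "⟫" => @inner 𝕜 _ _ x y

lemma cyc_indep {k : ℕ} (hk : 3 ≤ k) (g : Fin k → E)
    (hpat : ∀ i j : Fin k, i ≠ j → (⟪g i, g j⟫ ≠ 0 ↔ adjval k i.val j.val)) :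
    LinearIndependent 𝕜 (fun i : Fin (k - 2) => g ⟨i.val, by omega⟩) := by
  rw [Fintype.linearIndependent_iff]
  intro a ha
  have key : ∀ t : Fin k, ∑ j : Fin (k - 2), a j * ⟪g t, g ⟨j.val, by omega⟩⟫ = 0 := by
    intro t
    have : ⟪g t, ∑ j : Fin (k - 2), a j • g ⟨j.val, by omega⟩⟫ = 0 := by
      rw [ha, inner_zero_right]
    rw [inner_sum] at this
    simpa [inner_smul_right] using this
  have hzero : ∀ i j : Fin k, i ≠ j → ¬ adjval k i.val j.val → ⟪g i, g j⟫ = 0 := by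
    intro i j hij hadj
    by_contra h
    exact hadj ((hpat i j hij).1 h)
  have main : ∀ N, ∀ j : Fin (k - 2), j.val = N → a j = 0 := by
    intro N
    induction N using Nat.strong_induction_on with
    | _ N ih =>
      intro j hj
      rcases Nat.eq_zero_or_pos N with hN | hN
      · subst hN
        have hkey := key ⟨k - 1, by omega⟩
        rw [Finset.sum_eq_single j] at hkey
        · have hne : (⟨k - 1, by omega⟩ : Fin k) ≠ ⟨j.val, by omega⟩ := by
            simp only [ne_eq, Fin.mk.injEq]; omega
          have hadj : adjval k (k-1) j.val := by
            left; rw [hj, show k-1+1 = k by omega, Nat.mod_self]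
          have := (hpat _ _ hne).2 hadj
          exact (mul_eq_zero.1 hkey).resolve_right this
        · intro b _ hb
          have hbv : b.val ≠ 0 := by
            intro h; apply hb; apply Fin.ext; omega
          have hb2 : b.val < k - 2 := b.isLt
          have : ⟪g ⟨k - 1, by omega⟩, g ⟨b.val, by omega⟩⟫ = 0 := by
            apply hzero
            · simp only [ne_eq, Fin.mk.injEq]; omega
            · rintro (h | h) <;> simp only [Fin.val_mk] at h
              · rw [show k - 1 + 1 = k by omega, Nat.mod_self] at h; omega
              · rw [Nat.mod_eq_of_lt (by omega)] at h; omega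
          rw [this, mul_zero]
        · intro h; exact absurd (Finset.mem_univ j) h
      · have hNlt : N < k - 2 := hj ▸ j.isLt
        have hkey := key ⟨N - 1, by omega⟩
        rw [Finset.sum_eq_single j] at hkey
        · have hne : (⟨N - 1, by omega⟩ : Fin k) ≠ ⟨j.val, by omega⟩ := by
            simp only [ne_eq, Fin.mk.injEq]; omega
          have hadj : adjval k (N-1) j.val := by
            left; rw [hj, Nat.mod_eq_of_lt (by omega)]; omega
          have := (hpat _ _ hne).2 hadj
          exact (mul_eq_zero.1 hkey).resolve_right this
        · intro b _ hb
          rcases Nat.lt_or_ge b.val N with hbN | hbN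
          · rw [ih b.val hbN b rfl, zero_mul]
          · have hbv : b.val > N := by
              rcases Nat.lt_or_ge N b.val with h | h
              · exact h
              · exfalso; apply hb; apply Fin.ext; omega
            have hb2 : b.val < k - 2 := b.isLt
            have : ⟪g ⟨N - 1, by omega⟩, g ⟨b.val, by omega⟩⟫ = 0 := by
              apply hzero
              · simp only [ne_eq, Fin.mk.injEq]; omega
              · rintro (h | h) <;> simp only [Fin.val_mk] at h
                · rw [Nat.mod_eq_of_lt (by omega)] at h; omega
                · rw [Nat.mod_eq_of_lt (by omega)] at h; omega
            rw [this, mul_zero]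
        · intro h; exact absurd (Finset.mem_univ j) h
  intro i; exact main i.val i rfl

lemma cyc_finrank [FiniteDimensional 𝕜 E] {k : ℕ} (hk : 3 ≤ k) (g : Fin k → E)
    (hpat : ∀ i j : Fin k, i ≠ j → (⟪g i, g j⟫ ≠ 0 ↔ adjval k i.val j.val)) :
    k - 2 ≤ Module.finrank 𝕜 (Submodule.span 𝕜 (Set.range g)) := by
  have li := cyc_indep hk g hpat
  have h1 : Module.finrank 𝕜 (Submodule.span 𝕜
      (Set.range (fun i : Fin (k - 2) => g ⟨i.val, by omega⟩))) = k - 2 := by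
    rw [finrank_span_eq_card li, Fintype.card_fin]
  rw [← h1]
  apply Submodule.finrank_mono
  apply Submodule.span_mono
  rintro x ⟨i, rfl⟩
  exact ⟨⟨i.val, by omega⟩, rfl⟩

lemma finrank_sup_ortho [FiniteDimensional 𝕜 E] (U V : Submodule 𝕜 E) (h : U ⟂ V) :
    Module.finrank 𝕜 ↥(U ⊔ V) = Module.finrank 𝕜 U + Module.finrank 𝕜 V := by
  have h1 := Submodule.finrank_sup_add_finrank_inf_eq U V
  rw [h.disjoint.eq_bot, finrank_bot] at h1
  omega

lemma finrank_finset_sup_ortho [FiniteDimensional 𝕜 E] {ι : Type} [DecidableEq ι]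
    (s : Finset ι) (U : ι → Submodule 𝕜 E)
    (h : ∀ i ∈ s, ∀ j ∈ s, i ≠ j → U i ⟂ U j) :
    Module.finrank 𝕜 ↥(s.sup U) = ∑ i ∈ s, Module.finrank 𝕜 ↥(U i) := by
  induction s using Finset.cons_induction with
  | empty => simp
  | cons a s ha ih =>
    rw [Finset.sup_cons, Finset.sum_cons, ← ih (fun i hi j hj hij =>
      h i (Finset.mem_cons_of_mem hi) j (Finset.mem_cons_of_mem hj) hij)]
    apply finrank_sup_ortho
    refine Submodule.IsOrtho.symm ?_
    show Finset.sup s U ≤ (U a)ᗮ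
    apply Finset.sup_le
    intro i hi
    exact (h i (Finset.mem_cons_of_mem hi) a (Finset.mem_cons_self a s)
      (fun he => ha (he ▸ hi))).le

lemma inner_span_zero {S : Set E} {y : E} (h : ∀ s ∈ S, ⟪y, s⟫ = 0) :
    ∀ x ∈ Submodule.span 𝕜 S, ⟪y, x⟫ = 0 := by
  intro x hx
  induction hx using Submodule.span_induction with
  | mem s hs => exact h s hs
  | zero => exact inner_zero_right y
  | add a b _ _ ha hb => rw [inner_add_right, ha, hb, add_zero]
  | smul c a _ ha => rw [inner_smul_right, ha, mul_zero]

end InnerSpace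

set_option maxHeartbeats 2000000 in
theorem rank_lower_bound (𝕜 : Type) [RCLike 𝕜] (n m : ℕ) (hn : 3 ≤ n) (hm : 3 ≤ m)
    (A : Matrix (Fin n ⊕ Fin n × Fin m) (Fin n ⊕ Fin n × Fin m) 𝕜)
    (hA : A.PosSemidef)
    (hpat : ∀ v w, v ≠ w →
      (A v w ≠ 0 ↔ (corona (SimpleGraph.cycleGraph n) (SimpleGraph.cycleGraph m)).Adj v w)) :
    n * (m - 2) + (n - 2) ≤ A.rank := by
  classical
  obtain ⟨B, rfl⟩ : ∃ B : Matrix (Fin n ⊕ Fin n × Fin m) (Fin n ⊕ Fin n × Fin m) 𝕜,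
      A = Bᴴ * B := by
    open scoped MatrixOrder in
    exact CStarAlgebra.nonneg_iff_eq_star_mul_self.mp hA.nonneg
  let le : WithLp 2 ((Fin n ⊕ Fin n × Fin m) → 𝕜) ≃ₗ[𝕜] ((Fin n ⊕ Fin n × Fin m) → 𝕜) :=
    WithLp.linearEquiv 2 𝕜 ((Fin n ⊕ Fin n × Fin m) → 𝕜)
  let f : (Fin n ⊕ Fin n × Fin m) → EuclideanSpace 𝕜 (Fin n ⊕ Fin n × Fin m) :=
    fun v => le.symm (B.transpose v)
  have hinner : ∀ v w : Fin n ⊕ Fin n × Fin m, (inner 𝕜 (f v) (f w) : 𝕜) = (Bᴴ * B) v w := by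
    intro v w
    rw [PiLp.inner_apply, Matrix.mul_apply]
    apply Finset.sum_congr rfl
    intro x _
    rw [Matrix.conjTranspose_apply]
    exact RCLike.inner_apply' _ _
  have hrank : (Bᴴ * B).rank =
      Module.finrank 𝕜 (Submodule.span 𝕜 (Set.range f)) := by
    rw [Matrix.rank_conjTranspose_mul_self, Matrix.rank_eq_finrank_span_cols]
    have : Submodule.span 𝕜 (Set.range f)
        = Submodule.map
            (le.symm : ((Fin n ⊕ Fin n × Fin m) → 𝕜) →ₗ[𝕜]
              EuclideanSpace 𝕜 (Fin n ⊕ Fin n × Fin m))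
            (Submodule.span 𝕜 (Set.range B.transpose)) := by
      rw [Submodule.map_span]
      congr 1
      exact Set.range_comp _ _
    rw [this, LinearEquiv.finrank_map_eq]
    rfl
  rw [hrank]
  set W := Submodule.span 𝕜 (Set.range f) with hW
  set g : Fin n → Fin m → EuclideanSpace 𝕜 (Fin n ⊕ Fin n × Fin m) :=
    fun i j => f (Sum.inr (i, j)) with hg
  set U : Fin n → Submodule 𝕜 (EuclideanSpace 𝕜 (Fin n ⊕ Fin n × Fin m)) :=
    fun i => Submodule.span 𝕜 (Set.range (g i)) with hU
  have hAzero : ∀ v w, v ≠ w →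
      ¬ (corona (SimpleGraph.cycleGraph n) (SimpleGraph.cycleGraph m)).Adj v w →
      (inner 𝕜 (f v) (f w) : 𝕜) = 0 := by
    intro v w hvw hadj
    rw [hinner]
    by_contra h
    exact hadj ((hpat v w hvw).1 h)
  have hcross : ∀ i i' : Fin n, i ≠ i' → U i ⟂ U i' := by
    intro i i' hii
    rw [hU]
    apply Submodule.isOrtho_span.2
    rintro x ⟨j, rfl⟩ y ⟨j', rfl⟩
    apply hAzero
    · simp only [ne_eq, Sum.inr.injEq, Prod.mk.injEq]
      tauto
    · simp only [corona]
      rintro ⟨h1, -⟩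
      exact hii h1
  have hhubrim : ∀ i i' : Fin n, i ≠ i' → ∀ j, (inner 𝕜 (f (Sum.inl i)) (g i' j) : 𝕜) = 0 := by
    intro i i' hii j
    apply hAzero
    · simp
    · simp only [corona]
      exact fun h => hii h
  have hhubU : ∀ i i' : Fin n, i ≠ i' → ∀ x ∈ U i', (inner 𝕜 (f (Sum.inl i)) x : 𝕜) = 0 := by
    intro i i' hii
    apply inner_span_zero
    rintro s ⟨j, rfl⟩
    exact hhubrim i i' hii j
  let u : Fin n → EuclideanSpace 𝕜 (Fin n ⊕ Fin n × Fin m) :=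
    fun i => (Submodule.orthogonalProjection (U i) (f (Sum.inl i)) : _)
  let w : Fin n → EuclideanSpace 𝕜 (Fin n ⊕ Fin n × Fin m) :=
    fun i => f (Sum.inl i) - u i
  have hu_mem : ∀ i, u i ∈ U i := fun i => SetLike.coe_mem _
  have hw_orth : ∀ i i' : Fin n, ∀ x ∈ U i', (inner 𝕜 (w i) x : 𝕜) = 0 := by
    intro i i' x hx
    rcases eq_or_ne i i' with rfl | hii
    · exact Submodule.inner_left_of_mem_orthogonal hx
        (Submodule.sub_starProjection_mem_orthogonal _)
    · show (inner 𝕜 (f (Sum.inl i) - u i) x : 𝕜) = 0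
      rw [inner_sub_left, hhubU i i' hii x hx,
        (hcross i i' hii).inner_eq (hu_mem i) hx, sub_zero]
  have hww : ∀ i i' : Fin n, i ≠ i' →
      (inner 𝕜 (w i) (w i') : 𝕜) = (Bᴴ * B) (Sum.inl i) (Sum.inl i') := by
    intro i i' hii
    show (inner 𝕜 (w i) (f (Sum.inl i') - u i') : 𝕜) = _
    rw [inner_sub_right, hw_orth i i' (u i') (hu_mem i'), sub_zero]
    show (inner 𝕜 (f (Sum.inl i) - u i) (f (Sum.inl i')) : 𝕜) = _
    rw [inner_sub_left, hinner]
    have : (inner 𝕜 (f (Sum.inl i')) (u i) : 𝕜) = 0 :=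
      hhubU i' i hii.symm (u i) (hu_mem i)
    rw [← inner_conj_symm (u i), this, map_zero, sub_zero]
  set Sw := Submodule.span 𝕜 (Set.range w) with hSw
  have hSwU : ∀ i, Sw ⟂ U i := by
    intro i
    apply Submodule.isOrtho_span.2
    rintro x ⟨j, rfl⟩ y ⟨j', rfl⟩
    exact hw_orth j i _ (Submodule.subset_span ⟨j', rfl⟩)
  have hUW : ∀ i, U i ≤ W := by
    intro i
    apply Submodule.span_le.2
    rintro x ⟨j, rfl⟩
    exact Submodule.subset_span ⟨Sum.inr (i, j), rfl⟩
  have hSwW : Sw ≤ W := by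
    apply Submodule.span_le.2
    rintro x ⟨j, rfl⟩
    have h1 : f (Sum.inl j) ∈ W := Submodule.subset_span ⟨Sum.inl j, rfl⟩
    have h2 : u j ∈ W := hUW j (hu_mem j)
    exact Submodule.sub_mem W h1 h2
  set UU : Option (Fin n) → Submodule 𝕜 (EuclideanSpace 𝕜 (Fin n ⊕ Fin n × Fin m)) :=
    fun o => o.elim Sw U with hUU
  have hortho : ∀ i ∈ Finset.univ, ∀ j ∈ Finset.univ, i ≠ j → UU i ⟂ UU j := by
    rintro (_ | i) - (_ | j) - hij
    · exact absurd rfl hij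
    · exact hSwU j
    · exact (hSwU i).symm
    · exact hcross i j (fun h => hij (by rw [h]))
  have hsup : Finset.univ.sup UU ≤ W := by
    apply Finset.sup_le
    rintro (_ | i) -
    · exact hSwW
    · exact hUW i
  have hdim := finrank_finset_sup_ortho (𝕜 := 𝕜) Finset.univ UU hortho
  have hmono : Module.finrank 𝕜 ↥(Finset.univ.sup UU) ≤ Module.finrank 𝕜 ↥W :=
    Submodule.finrank_mono hsup
  have hUdim : ∀ i, m - 2 ≤ Module.finrank 𝕜 ↥(U i) := by
    intro i
    apply cyc_finrank hm (g i)
    intro j j' hjj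
    rw [hg]
    simp only []
    rw [hinner]
    rw [hpat _ _ (by simp [hjj, Prod.ext_iff])]
    constructor
    · rintro ⟨-, h2⟩
      exact (cycleGraph_adj_iff_adjval hm j j').1 h2
    · intro h
      exact ⟨rfl, (cycleGraph_adj_iff_adjval hm j j').2 h⟩
  have hSwdim : n - 2 ≤ Module.finrank 𝕜 ↥Sw := by
    apply cyc_finrank hn w
    intro i i' hii
    rw [hww i i' hii]
    rw [hpat _ _ (by simp [hii])]
    exact cycleGraph_adj_iff_adjval hn i i'
  have hsum : (n - 2) + n * (m - 2) ≤ Module.finrank 𝕜 ↥(Finset.univ.sup UU) := by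
    rw [hdim, Fintype.sum_option]
    have hthis : ∀ i : Fin n, m - 2 ≤ Module.finrank 𝕜 ↥(UU (some i)) := hUdim
    calc (n - 2) + n * (m - 2)
        ≤ Module.finrank 𝕜 ↥(UU none) + ∑ i : Fin n, Module.finrank 𝕜 ↥(UU (some i)) := by
          apply Nat.add_le_add hSwdim
          calc n * (m - 2) = ∑ _i : Fin n, (m - 2) := by
                rw [Finset.sum_const, Finset.card_univ, Fintype.card_fin, smul_eq_mul]
            _ ≤ _ := Finset.sum_le_sum (fun i _ => hthis i)
      _ = _ := rfl
  omega

/-! #### explicit construction -/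

def pz (N c : ℕ) : Fin N → ℤ := fun t => if t.val = c then 1 else 0
def altz (N : ℕ) : Fin N → ℤ := fun t => (-1)^t.val
def hubz (N : ℕ) : Fin N → ℤ := fun t => 2^t.val

def cvec (k : ℕ) (j : Fin k) : Fin (k-2) → ℤ :=
  if j.val = 0 then pz (k-2) 0
  else if j.val = k-1 then altz (k-2)
  else fun t => pz (k-2) (j.val-1) t + pz (k-2) j.val t

def dotz {N : ℕ} (x y : Fin N → ℤ) : ℤ := ∑ t, x t * y t

lemma dotz_comm {N : ℕ} (x y : Fin N → ℤ) : dotz x y = dotz y x := by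
  unfold dotz; exact Finset.sum_congr rfl (fun t _ => mul_comm _ _)

lemma dotz_add_left {N : ℕ} (x x' y : Fin N → ℤ) :
    dotz (fun t => x t + x' t) y = dotz x y + dotz x' y := by
  unfold dotz; rw [← Finset.sum_add_distrib]
  exact Finset.sum_congr rfl (fun t _ => add_mul _ _ _)

lemma dotz_add_right {N : ℕ} (x y y' : Fin N → ℤ) :
    dotz x (fun t => y t + y' t) = dotz x y + dotz x y' := by
  rw [dotz_comm, dotz_add_left, dotz_comm y x, dotz_comm y' x]

lemma dotz_pz_left {N : ℕ} (a : ℕ) (v : Fin N → ℤ) :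
    dotz (pz N a) v = if h : a < N then v ⟨a, h⟩ else 0 := by
  unfold dotz pz
  split_ifs with h
  · rw [Finset.sum_eq_single ⟨a, h⟩]
    · simp
    · intro b _ hb
      have : b.val ≠ a := fun he => hb (Fin.ext he)
      simp [this]
    · intro h'; exact absurd (Finset.mem_univ _) h'
  · apply Finset.sum_eq_zero
    intro t _
    have : t.val ≠ a := fun he => h (he ▸ t.isLt)
    simp [this]

lemma dotz_pz_right {N : ℕ} (a : ℕ) (v : Fin N → ℤ) :
    dotz v (pz N a) = if h : a < N then v ⟨a, h⟩ else 0 := by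
  rw [dotz_comm, dotz_pz_left]

lemma dotz_pz_pz {N : ℕ} (a b : ℕ) :
    dotz (pz N a) (pz N b) = if a = b ∧ a < N then 1 else 0 := by
  rw [dotz_pz_left]
  unfold pz
  by_cases h : a < N
  · simp only [dif_pos h]
    by_cases hab : a = b
    · subst hab; simp [h]
    · simp [hab]
  · simp only [dif_neg h]
    have : ¬(a = b ∧ a < N) := fun hc => h hc.2
    simp [this]

lemma neg_two_pow_sum_ne_zero {N : ℕ} (hN : 1 ≤ N) :
    (∑ t : Fin N, (-2 : ℤ)^t.val) ≠ 0 := by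
  intro h
  rw [Fin.sum_univ_eq_sum_range (fun i => (-2 : ℤ)^i)] at h
  have hg := geom_sum_mul (-2 : ℤ) N
  rw [h, zero_mul] at hg
  have h1 : (-2 : ℤ)^N = 1 := by omega
  have h2 : |(-2 : ℤ)^N| = 2^N := by
    rw [abs_pow]; norm_num
  rw [h1] at h2
  have h3 : (2:ℤ)^1 ≤ 2^N := pow_le_pow_right₀ (by norm_num) hN
  simp at h2
  omega

lemma dotz_hub_alt {N : ℕ} (hN : 1 ≤ N) : dotz (hubz N) (altz N) ≠ 0 := by
  unfold dotz hubz altz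
  have : ∀ t : Fin N, (2:ℤ)^t.val * (-1)^t.val = (-2)^t.val := by
    intro t
    rw [← mul_pow]; norm_num
  rw [Finset.sum_congr rfl (fun t _ => this t)]
  exact neg_two_pow_sum_ne_zero hN

lemma dot_cvec_aux {k : ℕ} (hk : 3 ≤ k) (j j' : Fin k) (hlt : j.val < j'.val) :
    dotz (cvec k j) (cvec k j') ≠ 0 ↔ adjval k j.val j'.val := by
  have hbIs : j'.val < k := j'.isLt
  have haIs : j.val < k := j.isLt
  have hb1 : j'.val ≤ k - 1 := by omega
  have ha2 : j.val ≤ k - 2 := by omega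
  unfold cvec
  by_cases ha0 : j.val = 0
  · rw [if_pos ha0]
    by_cases hbk : j'.val = k - 1
    · rw [if_neg (by omega), if_pos hbk]
      rw [dotz_pz_left, dif_pos (by omega : 0 < k - 2)]
      unfold altz
      simp only [pow_zero]
      constructor
      · intro _
        right
        rw [hbk, show k - 1 + 1 = k from by omega, Nat.mod_self, ha0]
      · intro _; norm_num
    · rw [if_neg (by omega), if_neg hbk]
      rw [dotz_add_right, dotz_pz_pz, dotz_pz_pz, ha0]
      have hrange : ¬ ((j'.val + 1) % k = 0) := by
        rw [Nat.mod_eq_of_lt (by omega)]; omega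
      by_cases hb1' : j'.val = 1
      · rw [if_pos ⟨by omega, by omega⟩, if_neg (by omega)]
        constructor
        · intro _
          left
          rw [Nat.mod_eq_of_lt (by omega)]; omega
        · intro _; norm_num
      · rw [if_neg (by omega), if_neg (by omega)]
        constructor
        · intro h; exact absurd rfl h
        · rintro (h | h)
          · rw [Nat.mod_eq_of_lt (by omega)] at h; omega
          · exact absurd h hrange
  · rw [if_neg ha0, if_neg (by omega)]
    by_cases hbk : j'.val = k - 1
    · rw [if_neg (by omega), if_pos hbk]
      rw [dotz_add_left, dotz_pz_left, dotz_pz_left, dif_pos (by omega : j.val - 1 < k - 2)]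
      unfold altz
      by_cases hak : j.val = k - 2
      · rw [dif_neg (by omega)]
        constructor
        · intro _
          left
          rw [Nat.mod_eq_of_lt (by omega)]; omega
        · intro _
          simpa using pow_ne_zero (j.val - 1) (by norm_num : (-1 : ℤ) ≠ 0)
      · rw [dif_pos (by omega)]
        simp only [Fin.val_mk]
        have : ((-1 : ℤ))^(j.val) = ((-1:ℤ))^(j.val - 1) * (-1) := by
          rw [← pow_succ, show j.val - 1 + 1 = j.val from by omega]
        rw [this]
        constructor
        · intro h; exfalso; apply h; ring
        · rintro (h | h)
          · rw [Nat.mod_eq_of_lt (by omega)] at h; omega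
          · rw [hbk, show k - 1 + 1 = k from by omega, Nat.mod_self] at h; omega
    · rw [if_neg (by omega), if_neg hbk]
      have hbm : j'.val ≤ k - 2 := by omega
      rw [dotz_add_left, dotz_add_right, dotz_add_right, dotz_pz_pz, dotz_pz_pz,
        dotz_pz_pz, dotz_pz_pz]
      have c1 : ¬ (j.val - 1 = j'.val - 1 ∧ j.val - 1 < k - 2) := by omega
      have c2 : ¬ (j.val - 1 = j'.val ∧ j.val - 1 < k - 2) := by omega
      have c4 : ¬ (j.val = j'.val ∧ j.val < k - 2) := by omega
      rw [if_neg c1, if_neg c2, if_neg c4]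
      by_cases hsucc : j'.val = j.val + 1
      · rw [if_pos (⟨by omega, by omega⟩ : j.val = j'.val - 1 ∧ j.val < k - 2)]
        constructor
        · intro _
          left
          rw [Nat.mod_eq_of_lt (by omega)]; omega
        · intro _; norm_num
      · rw [if_neg (show ¬ (j.val = j'.val - 1 ∧ j.val < k - 2) from by omega)]
        constructor
        · intro h; exact absurd rfl h
        · rintro (h | h)
          · rw [Nat.mod_eq_of_lt (by omega)] at h; omega
          · rw [Nat.mod_eq_of_lt (by omega)] at h; omega

lemma dot_cvec_cvec {k : ℕ} (hk : 3 ≤ k) (j j' : Fin k) (hne : j ≠ j') :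
    dotz (cvec k j) (cvec k j') ≠ 0 ↔ adjval k j.val j'.val := by
  rcases Nat.lt_trichotomy j.val j'.val with h | h | h
  · exact dot_cvec_aux hk j j' h
  · exact absurd (Fin.ext h) hne
  · rw [dotz_comm, dot_cvec_aux hk j' j h]
    unfold adjval
    exact or_comm

lemma dot_hub_cvec {k : ℕ} (hk : 3 ≤ k) (j : Fin k) :
    dotz (hubz (k-2)) (cvec k j) ≠ 0 := by
  unfold cvec
  by_cases ha0 : j.val = 0
  · rw [if_pos ha0, dotz_pz_right, dif_pos (by omega : 0 < k - 2)]
    unfold hubz; norm_num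
  · by_cases hak : j.val = k - 1
    · rw [if_neg ha0, if_pos hak]
      exact dotz_hub_alt (by omega)
    · rw [if_neg ha0, if_neg hak]
      have hjk : j.val ≤ k - 2 := by
        have := j.isLt; omega
      rw [dotz_add_right, dotz_pz_right, dotz_pz_right, dif_pos (by omega : j.val - 1 < k - 2)]
      unfold hubz
      by_cases h2 : j.val < k - 2
      · rw [dif_pos h2]
        have h1 : (0:ℤ) < 2 ^ ((⟨j.val - 1, by omega⟩ : Fin (k-2)) : ℕ) := by positivity
        have h3 : (0:ℤ) < 2 ^ ((⟨j.val, h2⟩ : Fin (k-2)) : ℕ) := by positivity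
        positivity
      · rw [dif_neg h2]
        have h1 : (0:ℤ) < 2 ^ ((⟨j.val - 1, by omega⟩ : Fin (k-2)) : ℕ) := by positivity
        omega

def bigB (n m : ℕ) : Matrix ((Fin n × Fin (m-2)) ⊕ Fin (n-2)) (Fin n ⊕ Fin n × Fin m) ℤ :=
  fun r c => match r, c with
  | Sum.inl p, Sum.inl i' => if p.1 = i' then hubz (m-2) p.2 else 0
  | Sum.inr s, Sum.inl i' => cvec n i' s
  | Sum.inl p, Sum.inr q => if p.1 = q.1 then cvec m q.2 p.2 else 0
  | Sum.inr _, Sum.inr _ => 0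

def zdot (n m : ℕ) (v w : Fin n ⊕ Fin n × Fin m) : ℤ :=
  ∑ r, bigB n m r v * bigB n m r w

lemma zdot_comm (n m : ℕ) (v w : Fin n ⊕ Fin n × Fin m) : zdot n m v w = zdot n m w v :=
  Finset.sum_congr rfl (fun r _ => mul_comm _ _)

lemma zdot_split (n m : ℕ) (v w : Fin n ⊕ Fin n × Fin m) :
    zdot n m v w = (∑ i : Fin n, ∑ t : Fin (m-2),
        bigB n m (Sum.inl (i, t)) v * bigB n m (Sum.inl (i, t)) w)
      + ∑ s : Fin (n-2), bigB n m (Sum.inr s) v * bigB n m (Sum.inr s) w := by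
  unfold zdot
  rw [Fintype.sum_sum_type]
  congr 1
  rw [Fintype.sum_prod_type]

lemma zdot_hh (n m : ℕ) (i i' : Fin n) (hii : i ≠ i') :
    zdot n m (Sum.inl i) (Sum.inl i') = dotz (cvec n i) (cvec n i') := by
  rw [zdot_split]
  have h1 : ∀ a : Fin n, ∀ t : Fin (m-2),
      bigB n m (Sum.inl (a, t)) (Sum.inl i) * bigB n m (Sum.inl (a, t)) (Sum.inl i') = 0 := by
    intro a t
    show (if a = i then hubz (m-2) t else 0) * (if a = i' then hubz (m-2) t else 0) = 0
    rcases eq_or_ne a i with rfl | h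
    · rw [if_neg hii, mul_zero]
    · rw [if_neg h, zero_mul]
  rw [Finset.sum_eq_zero (fun a _ => Finset.sum_eq_zero (fun t _ => h1 a t)), zero_add]
  rfl

lemma zdot_hr (n m : ℕ) (i i' : Fin n) (j : Fin m) :
    zdot n m (Sum.inl i) (Sum.inr (i', j)) =
      if i = i' then dotz (hubz (m-2)) (cvec m j) else 0 := by
  rw [zdot_split]
  have h2 : (∑ s : Fin (n-2),
      bigB n m (Sum.inr s) (Sum.inl i) * bigB n m (Sum.inr s) (Sum.inr (i', j))) = 0 := by
    apply Finset.sum_eq_zero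
    intro s _
    show cvec n i s * 0 = 0
    rw [mul_zero]
  rw [h2, add_zero]
  rcases eq_or_ne i i' with rfl | h
  · rw [if_pos rfl]
    rw [Finset.sum_eq_single i]
    · apply Finset.sum_congr rfl
      intro t _
      show (if i = i then hubz (m-2) t else 0) * (if i = i then cvec m j t else 0) = _
      rw [if_pos rfl, if_pos rfl]
    · intro a _ ha
      apply Finset.sum_eq_zero
      intro t _
      show (if a = i then hubz (m-2) t else 0) * (if a = i then cvec m j t else 0) = 0
      rw [if_neg ha, zero_mul]
    · intro h; exact absurd (Finset.mem_univ _) h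
  · rw [if_neg h]
    apply Finset.sum_eq_zero
    intro a _
    apply Finset.sum_eq_zero
    intro t _
    show (if a = i then hubz (m-2) t else 0) * (if a = i' then cvec m j t else 0) = 0
    rcases eq_or_ne a i with rfl | h'
    · rw [if_neg h, mul_zero]
    · rw [if_neg h', zero_mul]

lemma zdot_rr (n m : ℕ) (i i' : Fin n) (j j' : Fin m) :
    zdot n m (Sum.inr (i, j)) (Sum.inr (i', j')) =
      if i = i' then dotz (cvec m j) (cvec m j') else 0 := by
  rw [zdot_split]
  have h2 : (∑ s : Fin (n-2),
      bigB n m (Sum.inr s) (Sum.inr (i,j)) * bigB n m (Sum.inr s) (Sum.inr (i', j'))) = 0 := by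
    apply Finset.sum_eq_zero
    intro s _
    show (0:ℤ) * 0 = 0
    rw [mul_zero]
  rw [h2, add_zero]
  rcases eq_or_ne i i' with rfl | h
  · rw [if_pos rfl]
    rw [Finset.sum_eq_single i]
    · apply Finset.sum_congr rfl
      intro t _
      show (if i = i then cvec m j t else 0) * (if i = i then cvec m j' t else 0) = _
      rw [if_pos rfl, if_pos rfl]
    · intro a _ ha
      apply Finset.sum_eq_zero
      intro t _
      show (if a = i then cvec m j t else 0) * (if a = i then cvec m j' t else 0) = 0
      rw [if_neg ha, zero_mul]
    · intro h; exact absurd (Finset.mem_univ _) h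
  · rw [if_neg h]
    apply Finset.sum_eq_zero
    intro a _
    apply Finset.sum_eq_zero
    intro t _
    show (if a = i then cvec m j t else 0) * (if a = i' then cvec m j' t else 0) = 0
    rcases eq_or_ne a i with rfl | h'
    · rw [if_neg h, mul_zero]
    · rw [if_neg h', zero_mul]

lemma bigMatrix_entry (𝕜 : Type) [RCLike 𝕜] (n m : ℕ) (v w : Fin n ⊕ Fin n × Fin m) :
    (((bigB n m).map (Int.cast : ℤ → 𝕜))ᴴ * ((bigB n m).map (Int.cast : ℤ → 𝕜))) v w
      = ((zdot n m v w : ℤ) : 𝕜) := by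
  rw [Matrix.mul_apply]
  unfold zdot
  rw [Int.cast_sum]
  apply Finset.sum_congr rfl
  intro r _
  rw [Matrix.conjTranspose_apply, Matrix.map_apply, Matrix.map_apply, star_intCast,
    ← Int.cast_mul]

theorem upper_exists (𝕜 : Type) [RCLike 𝕜] (n m : ℕ) (hn : 3 ≤ n) (hm : 3 ≤ m) :
    ∃ A : Matrix (Fin n ⊕ Fin n × Fin m) (Fin n ⊕ Fin n × Fin m) 𝕜,
      A.PosSemidef ∧
      (∀ v w, v ≠ w → (A v w ≠ 0 ↔
        (corona (SimpleGraph.cycleGraph n) (SimpleGraph.cycleGraph m)).Adj v w)) ∧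
      A.rank ≤ n * (m - 2) + (n - 2) := by
  classical
  set BK := (bigB n m).map (Int.cast : ℤ → 𝕜) with hBK
  refine ⟨BKᴴ * BK, Matrix.posSemidef_conjTranspose_mul_self BK, ?_, ?_⟩
  · intro v w hvw
    rw [bigMatrix_entry]
    rw [Int.cast_ne_zero]
    match v, w with
    | Sum.inl i, Sum.inl i' =>
      have hii : i ≠ i' := fun h => hvw (by rw [h])
      rw [zdot_hh n m i i' hii]
      rw [dot_cvec_cvec hn i i' hii]
      show _ ↔ (SimpleGraph.cycleGraph n).Adj i i'
      rw [cycleGraph_adj_iff_adjval hn]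
    | Sum.inl i, Sum.inr q =>
      rw [zdot_hr n m i q.1 q.2]
      show _ ↔ i = q.1
      rcases eq_or_ne i q.1 with h | h
      · rw [if_pos h]
        simp [h, dot_hub_cvec hm q.2]
      · rw [if_neg h]
        simp [h]
    | Sum.inr p, Sum.inl i' =>
      rw [zdot_comm, zdot_hr n m i' p.1 p.2]
      show _ ↔ i' = p.1
      rcases eq_or_ne i' p.1 with h | h
      · rw [if_pos h]
        simp [h, dot_hub_cvec hm p.2]
      · rw [if_neg h]
        simp [h]
    | Sum.inr p, Sum.inr q =>
      rw [zdot_rr n m p.1 q.1 p.2 q.2]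
      show _ ↔ p.1 = q.1 ∧ (SimpleGraph.cycleGraph m).Adj p.2 q.2
      rcases eq_or_ne p.1 q.1 with h | h
      · rw [if_pos h]
        have hj : p.2 ≠ q.2 := by
          intro h2
          exact hvw (by rw [show p = q from Prod.ext h h2])
        rw [dot_cvec_cvec hm p.2 q.2 hj, cycleGraph_adj_iff_adjval hm]
        simp [h]
      · rw [if_neg h]
        simp [h]
  · calc (BKᴴ * BK).rank = BK.rank := Matrix.rank_conjTranspose_mul_self BK
      _ ≤ Fintype.card ((Fin n × Fin (m-2)) ⊕ Fin (n-2)) := Matrix.rank_le_card_height BK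
      _ = n * (m - 2) + (n - 2) := by simp

end MsrAux

open MsrAux in
lemma mrPlus_corona_cycle_cycle_generic (𝕜 : Type) [RCLike 𝕜] (n m : ℕ)
    (hn : 3 ≤ n) (hm : 3 ≤ m) :
    mrPlus 𝕜 (corona (SimpleGraph.cycleGraph n) (SimpleGraph.cycleGraph m)) =
      n * (m - 1) - 2 := by
  classical
  obtain ⟨A, hpsd, hpat, hrk⟩ := upper_exists 𝕜 n m hn hm
  have hbound : n * (m - 2) + (n - 2) = n * (m - 1) - 2 := by
    have h1 : n * (m - 1) = n * (m - 2) + n := by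
      rw [show m - 1 = (m - 2) + 1 from by omega, Nat.mul_add, Nat.mul_one]
    omega
  set S := {r : ℕ | ∃ A : Matrix (Fin n ⊕ Fin n × Fin m) (Fin n ⊕ Fin n × Fin m) 𝕜,
    A.PosSemidef ∧
    (∀ i j, i ≠ j → (A i j ≠ 0 ↔
      (corona (SimpleGraph.cycleGraph n) (SimpleGraph.cycleGraph m)).Adj i j)) ∧
    A.rank = r} with hS
  have hlow : ∀ r ∈ S, n * (m - 2) + (n - 2) ≤ r := by
    rintro r ⟨A', h1, h2, rfl⟩
    exact rank_lower_bound 𝕜 n m hn hm A' h1 h2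
  have hAr : A.rank = n * (m - 2) + (n - 2) :=
    le_antisymm hrk (rank_lower_bound 𝕜 n m hn hm A hpsd hpat)
  have hmem : n * (m - 2) + (n - 2) ∈ S := ⟨A, hpsd, hpat, hAr⟩
  have : sInf S = n * (m - 2) + (n - 2) :=
    le_antisymm (Nat.sInf_le hmem) (le_csInf ⟨_, hmem⟩ hlow)
  show sInf S = n * (m - 1) - 2
  rw [this, hbound]

end MsrProof

/-- for `n, m ≥ 3`, `mr₊(C_n ∘ C_m) = n(m − 1) − 2`. -/
theorem mrPlus_corona_cycle_cycle (n m : ℕ) (hn : 3 ≤ n) (hm : 3 ≤ m) :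
    mrPlus ℝ (corona (SimpleGraph.cycleGraph n) (SimpleGraph.cycleGraph m)) =
      n * (m - 1) - 2 ∧
    mrPlus ℂ (corona (SimpleGraph.cycleGraph n) (SimpleGraph.cycleGraph m)) =
      n * (m - 1) - 2 :=
  ⟨mrPlus_corona_cycle_cycle_generic ℝ n m hn hm,
   mrPlus_corona_cycle_cycle_generic ℂ n m hn hm⟩
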